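/- Fix c, σ, t > 0, and for ε > 0 set ν(ε) = cσ/ε². Define c₁(ε) = (1/(4π))(1 − e^{−ν(ε)t}), c₂(ε) = −(1/(4π))(c/(εν(ε)))(1 − e^{−ν(ε)t}) + (1/(4π))(c/ε) t e^{−ν(ε)t}, c₃(ε) = −(1/(4π))(1/ν(ε))(1 − e^{−ν(ε)t}) + t/(4π), c₄(ε) = e^{−ν(ε)t}, and c₅(ε) = (1/(4π))(c/ε) t e^{−ν(ε)t}. Then as ε → ∞: c₁(ε) → 0, c₂(ε) → 0, c₃(ε) → 0, c₄(ε) → 1, and c₅(ε) → 0. Consequently, in the optically thin limit the integral solution degenerates to the collisionless evolution I(x, Ω, t) = I₀(x₀). -/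

import Mathlib

open Real Filter

/-- Optically thin limit `ε → ∞` of the coefficients of the integral solution:
`c₁ → 0`, `c₂ → 0`, `c₃ → 0`, `c₄ → 1`, `c₅ → 0`, and consequently the integral
solution `c₁φ₀ + c₂ Ω·∇φ₀ + c₃ ∂ₜφ₀ + c₄ I₀ + c₅ Ω·∇I₀` degenerates to the
collisionless evolution `I = I₀(x₀)`. -/
theorem optically_thin_limit_coefficients
    (c σ t : ℝ) (hc : 0 < c) (hσ : 0 < σ) (ht : 0 < t)
    (ν c₁ c₂ c₃ c₄ c₅ : ℝ → ℝ)
    (hν : ∀ ε, ν ε = c * σ / ε ^ 2)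
    (hc₁ : ∀ ε, c₁ ε = (1 / (4 * π)) * (1 - Real.exp (-(ν ε) * t)))
    (hc₂ : ∀ ε, c₂ ε = -(1 / (4 * π)) * (c / (ε * ν ε)) * (1 - Real.exp (-(ν ε) * t)) +
        (1 / (4 * π)) * (c / ε) * t * Real.exp (-(ν ε) * t))
    (hc₃ : ∀ ε, c₃ ε = -(1 / (4 * π)) * (1 / ν ε) * (1 - Real.exp (-(ν ε) * t)) +
        t / (4 * π))
    (hc₄ : ∀ ε, c₄ ε = Real.exp (-(ν ε) * t))
    (hc₅ : ∀ ε, c₅ ε = (1 / (4 * π)) * (c / ε) * t * Real.exp (-(ν ε) * t)) :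
    Tendsto c₁ atTop (nhds 0) ∧
    Tendsto c₂ atTop (nhds 0) ∧
    Tendsto c₃ atTop (nhds 0) ∧
    Tendsto c₄ atTop (nhds 1) ∧
    Tendsto c₅ atTop (nhds 0) ∧
    ∀ A B C D E : ℝ,
      Tendsto (fun ε => c₁ ε * A + c₂ ε * B + c₃ ε * C + c₄ ε * D + c₅ ε * E)
        atTop (nhds D) := by
  have hπ : (0:ℝ) < 4 * π := by positivity
  -- ν ε * t → 0 within {0}ᶜ
  have hνt0 : Tendsto (fun ε => ν ε * t) atTop (nhds 0) := by
    have h1 : Tendsto (fun ε : ℝ => (c * σ * t) / ε ^ 2) atTop (nhds 0) :=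
      tendsto_const_nhds.div_atTop (tendsto_pow_atTop two_ne_zero)
    refine h1.congr' ?_
    filter_upwards [eventually_ge_atTop (1:ℝ)] with ε hε
    rw [hν]; ring
  have hνpos : ∀ᶠ ε in atTop, 0 < ν ε := by
    filter_upwards [eventually_ge_atTop (1:ℝ)] with ε hε
    rw [hν]; positivity
  have hu : Tendsto (fun ε => ν ε * t) atTop (nhdsWithin 0 {0}ᶜ) := by
    rw [tendsto_nhdsWithin_iff]
    refine ⟨hνt0, ?_⟩
    filter_upwards [hνpos] with ε hε
    exact (mul_pos hε ht).ne'
  -- slope limit: (1 - exp(-u))/u → 1 as u → 0, u ≠ 0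
  have hexp0 : HasDerivAt (fun u : ℝ => 1 - Real.exp (-u)) 1 0 := by
    have h1 : HasDerivAt (fun u : ℝ => Real.exp (-u)) (-1) 0 := by
      simpa [Function.comp_def] using (Real.hasDerivAt_exp (-0:ℝ)).comp 0 (hasDerivAt_neg 0)
    simpa [Pi.sub_def] using (hasDerivAt_const (0:ℝ) (1:ℝ)).sub h1
  have hslope : Tendsto (fun u : ℝ => (1 - Real.exp (-u)) / u)
      (nhdsWithin 0 {0}ᶜ) (nhds 1) := by
    have := hasDerivAt_iff_tendsto_slope.mp hexp0
    refine this.congr ?_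
    intro u
    simp [slope_def_field, div_eq_div_iff]
  have hratio : Tendsto (fun ε => (1 - Real.exp (-(ν ε * t))) / (ν ε * t))
      atTop (nhds 1) := hslope.comp hu
  -- exp(-(ν ε) * t) → 1
  have hE : Tendsto (fun ε => Real.exp (-(ν ε) * t)) atTop (nhds 1) := by
    have h := hνt0.neg
    rw [neg_zero] at h
    have := (Real.continuous_exp.tendsto 0).comp h
    simpa [neg_mul, Function.comp_def] using this
  -- c/ε → 0 and (c*t)/ε → 0
  have hcε : Tendsto (fun ε : ℝ => c / ε) atTop (nhds 0) :=
    tendsto_const_nhds.div_atTop tendsto_id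
  have hctε : Tendsto (fun ε : ℝ => (c * t) / ε) atTop (nhds 0) :=
    tendsto_const_nhds.div_atTop tendsto_id
  -- c₁
  have h1 : Tendsto c₁ atTop (nhds 0) := by
    have : Tendsto (fun ε => (1 / (4 * π)) * (1 - Real.exp (-(ν ε) * t)))
        atTop (nhds ((1 / (4 * π)) * (1 - 1))) :=
      (tendsto_const_nhds.sub hE).const_mul _
    simpa [funext hc₁] using this
  -- c₄
  have h4 : Tendsto c₄ atTop (nhds 1) := by simpa [funext hc₄] using hE
  -- c₅
  have h5 : Tendsto c₅ atTop (nhds 0) := by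
    have : Tendsto (fun ε => (1 / (4 * π)) * (c / ε) * t * Real.exp (-(ν ε) * t))
        atTop (nhds ((1 / (4 * π)) * 0 * t * 1)) :=
      (((hcε.const_mul _).mul_const t).mul hE)
    simpa [funext hc₅] using this
  -- c₂
  have h2 : Tendsto c₂ atTop (nhds 0) := by
    have key : Tendsto (fun ε => -(1 / (4 * π)) * ((c * t) / ε) *
        ((1 - Real.exp (-(ν ε * t))) / (ν ε * t)) +
        (1 / (4 * π)) * (c / ε) * t * Real.exp (-(ν ε) * t))
        atTop (nhds (-(1 / (4 * π)) * 0 * 1 + (1 / (4 * π)) * 0 * t * 1)) :=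
      (((hctε.const_mul _).mul hratio)).add (((hcε.const_mul _).mul_const t).mul hE)
    have heq : ∀ᶠ ε in atTop, c₂ ε = -(1 / (4 * π)) * ((c * t) / ε) *
        ((1 - Real.exp (-(ν ε * t))) / (ν ε * t)) +
        (1 / (4 * π)) * (c / ε) * t * Real.exp (-(ν ε) * t) := by
      filter_upwards [hνpos, eventually_ge_atTop (1:ℝ)] with ε hν0 hε1
      have hε0 : ε ≠ 0 := by linarith
      have hν' : ν ε ≠ 0 := hν0.ne'
      rw [hc₂]
      simp only [neg_mul]
      field_simp
    have := key.congr' (heq.mono fun ε h => h.symm)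
    simpa using this
  -- c₃
  have h3 : Tendsto c₃ atTop (nhds 0) := by
    have key : Tendsto (fun ε => -(1 / (4 * π)) * t *
        ((1 - Real.exp (-(ν ε * t))) / (ν ε * t)) + t / (4 * π))
        atTop (nhds (-(1 / (4 * π)) * t * 1 + t / (4 * π))) :=
      (hratio.const_mul _).add tendsto_const_nhds
    have heq : ∀ᶠ ε in atTop, c₃ ε = -(1 / (4 * π)) * t *
        ((1 - Real.exp (-(ν ε * t))) / (ν ε * t)) + t / (4 * π) := by
      filter_upwards [hνpos] with ε hν0
      have hν' : ν ε ≠ 0 := hν0.ne'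
      rw [hc₃]
      simp only [neg_mul]
      field_simp
    have h0 : -(1 / (4 * π)) * t * 1 + t / (4 * π) = 0 := by field_simp; ring
    rw [← h0]
    exact key.congr' (heq.mono fun ε h => h.symm)
  refine ⟨h1, h2, h3, h4, h5, fun A B C D E => ?_⟩
  have : Tendsto (fun ε => c₁ ε * A + c₂ ε * B + c₃ ε * C + c₄ ε * D + c₅ ε * E)
      atTop (nhds (0 * A + 0 * B + 0 * C + 1 * D + 0 * E)) :=
    ((((h1.mul_const A).add (h2.mul_const B)).add (h3.mul_const C)).add
      (h4.mul_const D)).add (h5.mul_const E)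
  simpa using this
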